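/- arXiv:2103.15198 — 4 statements merged into one kernel-verified Lean document; each statement's English description precedes it below -/
import Mathlib

section
/- Let p be a prime, n ≥ 2 an integer, and x, y, a ∈ ℚ_p with y ≠ a. If v(y - x) > 2·v(n) + v(y - a), then x - a and y - a lie in the same coset of the subgroup of n-th powers of ℚ_p^×; that is, (x - a)/(y - a) is an n-th power in ℚ_p. -/
/-- Haskell–Macpherson Lemma 2.3: if `v(y - x) > 2·v(n) + v(y - a)` then
`(x - a)/(y - a)` is an `n`-th power in `ℚ_p`. -/
theorem stmt_1 (p : ℕ) [Fact p.Prime] (n : ℕ) (hn : 2 ≤ n) (x y a : ℚ_[p])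
    (hya : y ≠ a) (h : ‖y - x‖ < ‖(n : ℚ_[p])‖ ^ 2 * ‖y - a‖) :
    ∃ z : ℚ_[p], z ^ n = (x - a) / (y - a) := by
  have hya' : y - a ≠ 0 := sub_ne_zero.mpr hya
  set u : ℚ_[p] := (x - a) / (y - a) with hu
  have hnn : (n : ℚ_[p]) ≠ 0 := by
    exact_mod_cast Nat.cast_ne_zero.mpr (by omega)
  have key : ‖u - 1‖ < ‖(n : ℚ_[p])‖ ^ 2 := by
    have : u - 1 = (x - y) / (y - a) := by
      rw [hu, div_sub_one hya']; congr 1; ring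
    rw [this, norm_div]
    rw [div_lt_iff₀ (norm_pos_iff.mpr hya')]
    calc ‖x - y‖ = ‖y - x‖ := by rw [← norm_neg]; ring_nf
    _ < _ := h
  have hnle : ‖(n : ℚ_[p])‖ ≤ 1 := Padic.norm_int_le_one n
  have hu1 : ‖u - 1‖ < 1 := lt_of_lt_of_le key (pow_le_one₀ (norm_nonneg _) hnle)
  have hule : ‖u‖ ≤ 1 := by
    have : ‖u‖ = ‖(u - 1) + 1‖ := by ring_nf
    rw [this]
    calc ‖(u - 1) + 1‖ ≤ max ‖u - 1‖ ‖(1:ℚ_[p])‖ := Padic.nonarchimedean _ _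
    _ ≤ 1 := by simp [hu1.le]
  set U : ℤ_[p] := ⟨u, hule⟩ with hU
  set F : Polynomial ℤ_[p] := Polynomial.X ^ n - Polynomial.C U with hF
  have hd : F.derivative.eval 1 = (n : ℤ_[p]) := by
    simp [hF, Polynomial.derivative_pow]
  have hnorm : ‖F.eval 1‖ < ‖F.derivative.eval 1‖ ^ 2 := by
    rw [hd]
    have h1 : F.eval 1 = 1 - U := by simp [hF]
    rw [h1]
    have : ‖(1 : ℤ_[p]) - U‖ = ‖u - 1‖ := by
      rw [← norm_neg]
      have : -((1:ℤ_[p]) - U) = U - 1 := by ring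
      rw [this, PadicInt.norm_def]
      push_cast
      rfl
    rw [this]
    have hne : ‖((n : ℤ_[p]) : ℚ_[p])‖ = ‖(n : ℚ_[p])‖ := by push_cast; rfl
    rw [PadicInt.norm_def, hne]
    exact key
  obtain ⟨z, hz, -⟩ := hensels_lemma hnorm
  refine ⟨(z : ℚ_[p]), ?_⟩
  have : z ^ n = U := by
    have := hz
    simp [hF, sub_eq_zero] at this
    exact this
  have := congrArg (PadicInt.Coe.ringHom (p := p)) this
  exact this
end

section
/- Let p be a prime, λ ∈ ℚ_p^×, n ≥ 2, γ₁ < γ₂ in ℤ ∪ {−∞, +∞}, and let X = {x ∈ ℚ_p : γ₁ < v(x) < γ₂ and λ·x is a nonzero n-th power}. Suppose y₀ ∈ X satisfies v(y₀) + 2·v(n) < −1. Then the ball B_{−1}(y₀) = {x : v(x − y₀) > −1} is contained in X. -/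
/-- The ball `B_γ(a) = {x : v(x - a) > γ}` in `ℚ_p`. -/
def pBall (p : ℕ) [Fact p.Prime] (γ : ℤ) (a : ℚ_[p]) : Set ℚ_[p] :=
  {x : ℚ_[p] | ‖x - a‖ < (p : ℝ) ^ (-γ)}

/-- The cell `{x ∈ ℚ_p : γ₁ < v(x) < γ₂ ∧ P_n(λ·x)}`, where `γ₁, γ₂ ∈ ℤ ∪ {−∞, +∞}`
and `P_n(z)` means `z` is a nonzero `n`-th power. -/
def pCell (p : ℕ) [Fact p.Prime] (γ₁ γ₂ : WithBot (WithTop ℤ)) (lam : ℚ_[p]) (n : ℕ) :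
    Set ℚ_[p] :=
  {x : ℚ_[p] | x ≠ 0 ∧ γ₁ < ((x.valuation : WithTop ℤ) : WithBot (WithTop ℤ)) ∧
    ((x.valuation : WithTop ℤ) : WithBot (WithTop ℤ)) < γ₂ ∧
    ∃ z : ℚ_[p], z ≠ 0 ∧ z ^ n = lam * x}

/-- Hensel step: if `‖u‖ < ‖n‖²` then `1 + u` is an `n`-th power in `ℚ_p`. -/
lemma one_add_pow (p : ℕ) [Fact p.Prime] (n : ℕ) (hn : n ≠ 0) (u : ℚ_[p])
    (hu : ‖u‖ < ‖(n : ℚ_[p])‖ ^ 2) :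
    ∃ z : ℚ_[p], z ≠ 0 ∧ z ^ n = 1 + u := by
  have hnn : ‖(n : ℚ_[p])‖ ≤ 1 := by
    simpa using Padic.norm_int_le_one (p := p) (n : ℤ)
  have hun : ‖u‖ < 1 := lt_of_lt_of_le hu (by nlinarith [norm_nonneg ((n : ℚ_[p]))])
  have hmem : ‖(1 : ℚ_[p]) + u‖ ≤ 1 := by
    refine le_trans (Padic.nonarchimedean _ _) ?_
    simp [hun.le]
  set c : ℤ_[p] := ⟨1 + u, hmem⟩ with hc
  set U : ℤ_[p] := ⟨u, hun.le⟩ with hU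
  set F : Polynomial ℤ_[p] := Polynomial.X ^ n - Polynomial.C c with hF
  have heval : F.eval 1 = -U := by
    apply Subtype.ext
    simp [hF, hc, hU]
    erw [Polynomial.eval_C]
    show (1 : ℚ_[p]) - (1 + u) = -u
    ring
  have hderiv : F.derivative.eval 1 = (n : ℤ_[p]) := by
    simp [hF]
    rw [Polynomial.derivative_X_pow]
    simp
  have hnorm : ‖F.eval 1‖ < ‖F.derivative.eval 1‖ ^ 2 := by
    rw [heval, hderiv, norm_neg]
    have h1 : ‖U‖ = ‖u‖ := rfl
    have h2 : ‖(n : ℤ_[p])‖ = ‖(n : ℚ_[p])‖ := by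
      rw [PadicInt.norm_def]; norm_cast
    rw [h1, h2]; exact hu
  obtain ⟨z, hz, -⟩ := hensels_lemma hnorm
  have hzn : (z : ℚ_[p]) ^ n = 1 + u := by
    have : z ^ n = c := by
      have := sub_eq_zero.mp (by simpa [hF] using hz)
      simpa using this
    have := congrArg (Subtype.val) this
    simpa using this
  refine ⟨(z : ℚ_[p]), ?_, hzn⟩
  intro h0
  have : (1 : ℚ_[p]) + u = 0 := by rw [← hzn, h0, zero_pow hn]
  have : u = -1 := by linear_combination this
  rw [this] at hun
  simp at hun

/-- If `y₀` lies in the cell `X` and `v(y₀) + 2·v(n) < -1`, then the ball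
`B_{-1}(y₀)` is contained in `X`. -/
theorem stmt_4 (p : ℕ) [Fact p.Prime] (lam : ℚ_[p]) (hlam : lam ≠ 0) (n : ℕ) (hn : 2 ≤ n)
    (γ₁ γ₂ : WithBot (WithTop ℤ)) (hγ : γ₁ < γ₂) (y₀ : ℚ_[p])
    (hy₀ : y₀ ∈ pCell p γ₁ γ₂ lam n)
    (hval : y₀.valuation + 2 * (n : ℚ_[p]).valuation < -1) :
    pBall p (-1) y₀ ⊆ pCell p γ₁ γ₂ lam n := by
  intro x hx
  obtain ⟨hy0, hγ1, hγ2, z₀, hz₀, hz₀n⟩ := hy₀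
  have hp1 : (1 : ℝ) < p := Nat.one_lt_cast.2 (Fact.out : p.Prime).one_lt
  have hp0 : (0 : ℝ) < p := lt_trans one_pos hp1
  -- ball membership gives ‖x - y₀‖ ≤ 1
  have hball : ‖x - y₀‖ < (p : ℝ) ^ (1 : ℤ) := by simpa [pBall] using hx
  have hsub1 : ‖x - y₀‖ ≤ 1 := by
    have := (Padic.norm_le_pow_iff_norm_lt_pow_add_one (x - y₀) 0).2 (by simpa using hball)
    simpa using this
  -- valuation facts
  have hvn : 0 ≤ (n : ℚ_[p]).valuation := by
    rw [← Padic.norm_le_one_iff_val_nonneg]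
    simpa using Padic.norm_int_le_one (p := p) (n : ℤ)
  have hvy : y₀.valuation ≤ -2 - 2 * (n : ℚ_[p]).valuation := by omega
  have hny : ‖y₀‖ = (p : ℝ) ^ (-y₀.valuation) := Padic.norm_eq_zpow_neg_valuation hy0
  have hy_big : (p : ℝ) ^ (2 + 2 * (n : ℚ_[p]).valuation) ≤ ‖y₀‖ := by
    rw [hny]
    exact zpow_le_zpow_right₀ hp1.le (by omega)
  have hy_gt1 : (1 : ℝ) < ‖y₀‖ := by
    refine lt_of_lt_of_le ?_ hy_big
    calc (1 : ℝ) = (p : ℝ) ^ (0 : ℤ) := by simp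
      _ < (p : ℝ) ^ (2 + 2 * (n : ℚ_[p]).valuation) := by
          exact zpow_lt_zpow_right₀ hp1 (by omega)
  -- ‖x‖ = ‖y₀‖
  have hne : ‖x - y₀‖ ≠ ‖y₀‖ := ne_of_lt (lt_of_le_of_lt hsub1 hy_gt1)
  have hnx : ‖x‖ = ‖y₀‖ := by
    have : x = (x - y₀) + y₀ := by ring
    rw [this, Padic.add_eq_max_of_ne hne]
    exact max_eq_right (le_of_lt (lt_of_le_of_lt hsub1 hy_gt1))
  have hx0 : x ≠ 0 := by
    intro h; rw [h, norm_zero] at hnx; linarith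
  have hvx : x.valuation = y₀.valuation := by
    have h := hnx
    rw [Padic.norm_eq_zpow_neg_valuation hx0, hny] at h
    have := zpow_right_injective₀ hp0 hp1.ne' h
    omega
  refine ⟨hx0, by rw [hvx]; exact hγ1, by rw [hvx]; exact hγ2, ?_⟩
  -- n-th power
  set u : ℚ_[p] := (x - y₀) / y₀ with hu_def
  have hun : ‖u‖ < ‖(n : ℚ_[p])‖ ^ 2 := by
    have hn0 : (n : ℚ_[p]) ≠ 0 := Nat.cast_ne_zero.2 (by omega)
    have hnu : ‖u‖ ≤ ‖y₀‖⁻¹ := by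
      rw [hu_def, norm_div, div_eq_mul_inv]
      calc ‖x - y₀‖ * ‖y₀‖⁻¹ ≤ 1 * ‖y₀‖⁻¹ := by gcongr
        _ = ‖y₀‖⁻¹ := one_mul _
    have h2 : ‖(n : ℚ_[p])‖ ^ 2 = (p : ℝ) ^ (-(2 * (n : ℚ_[p]).valuation)) := by
      rw [Padic.norm_eq_zpow_neg_valuation hn0, sq, ← zpow_add₀ (by positivity : (p : ℝ) ≠ 0)]
      ring_nf
    calc ‖u‖ ≤ ‖y₀‖⁻¹ := hnu
      _ ≤ ((p : ℝ) ^ (2 + 2 * (n : ℚ_[p]).valuation))⁻¹ := by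
          exact inv_anti₀ (by positivity) hy_big
      _ = (p : ℝ) ^ (-(2 + 2 * (n : ℚ_[p]).valuation)) := by rw [zpow_neg]
      _ < (p : ℝ) ^ (-(2 * (n : ℚ_[p]).valuation)) := zpow_lt_zpow_right₀ hp1 (by omega)
      _ = ‖(n : ℚ_[p])‖ ^ 2 := h2.symm
  obtain ⟨z, hz, hzn⟩ := one_add_pow p n (by omega) u hun
  have h1u : (1 : ℚ_[p]) + u = x / y₀ := by
    rw [hu_def]; field_simp
    ring
  refine ⟨z₀ * z, mul_ne_zero hz₀ hz, ?_⟩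
  rw [mul_pow, hz₀n, hzn, h1u]
  field_simp
end

section
/- Let p be a prime, λ ∈ ℚ_p^×, n ≥ 2, γ₁ < γ₂ in ℤ ∪ {−∞, +∞}, and let X = {x ∈ ℚ_p : γ₁ < v(x) < γ₂ and λ·x is a nonzero n-th power}. If X is not contained in any ball B_{−m}(0) for m ∈ ℕ (i.e. the valuation is unbounded below on X), then for every k ∈ ℕ, X contains a ball of radius −k, i.e. there exists a ∈ X with {x : v(x − a) > −k} ⊆ X. -/
lemma nth_power_near_one (p : ℕ) [Fact p.Prime] (n : ℕ) (hn : 0 < n) (u : ℚ_[p])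
    (hu : ‖u‖ < ‖(n : ℚ_[p])‖ ^ 2) : ∃ z : ℚ_[p], z ≠ 0 ∧ z ^ n = 1 + u := by
  have hnle : ‖(n : ℚ_[p])‖ ≤ 1 := by
    simpa using Padic.norm_int_le_one (p := p) (n : ℤ)
  have hu1 : ‖u‖ < 1 := lt_of_lt_of_le hu (by nlinarith [norm_nonneg ((n:ℚ_[p]))])
  set uz : ℤ_[p] := ⟨u, hu1.le⟩ with huz
  set F : Polynomial ℤ_[p] := Polynomial.X ^ n - Polynomial.C (1 + uz) with hF
  have heval : F.eval 1 = -uz := by simp [hF]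
  have hderiv : F.derivative.eval 1 = (n : ℤ_[p]) := by
    simp [hF, Polynomial.derivative_pow]
  have hnorm : ‖F.eval 1‖ < ‖F.derivative.eval 1‖ ^ 2 := by
    rw [heval, hderiv, norm_neg]
    have h1 : ‖uz‖ = ‖u‖ := rfl
    have h2 : ‖((n : ℤ_[p]))‖ = ‖(n : ℚ_[p])‖ := by
      rw [PadicInt.norm_def]; norm_cast
    rw [h1, h2]; exact hu
  obtain ⟨z, hz, -⟩ := hensels_lemma hnorm
  have hzeq : z ^ n = 1 + uz := by
    have := sub_eq_zero.mp (by simpa [hF] using hz)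
    simpa using this
  have hcast : ((z : ℚ_[p])) ^ n = 1 + u := by
    have := congrArg (fun w : ℤ_[p] => (w : ℚ_[p])) hzeq
    push_cast at this
    exact this
  have h1u : (1 : ℚ_[p]) + u ≠ 0 := by
    intro h
    have hne : ‖(1:ℚ_[p])‖ ≠ ‖u‖ := by simp [hu1.ne']
    have : ‖(1 : ℚ_[p]) + u‖ = 1 := by
      rw [Padic.add_eq_max_of_ne hne]; simp [max_eq_left hu1.le]
    rw [h] at this; simp at this
  refine ⟨(z : ℚ_[p]), ?_, hcast⟩
  intro h0
  apply h1u
  rw [← hcast, h0, zero_pow hn.ne']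


/-- If a cell `X` is not contained in any ball `B_{-m}(0)` (the valuation is unbounded
below on `X`), then for every `k` the cell `X` contains a ball of radius `-k`. -/
theorem stmt_5 (p : ℕ) [Fact p.Prime] (lam : ℚ_[p]) (hlam : lam ≠ 0) (n : ℕ) (hn : 2 ≤ n)
    (γ₁ γ₂ : WithBot (WithTop ℤ)) (hγ : γ₁ < γ₂)
    (hunb : ∀ m : ℕ, ¬ (pCell p γ₁ γ₂ lam n ⊆ pBall p (-(m : ℤ)) 0)) :
    ∀ k : ℕ, ∃ a ∈ pCell p γ₁ γ₂ lam n, pBall p (-(k : ℤ)) a ⊆ pCell p γ₁ γ₂ lam n := by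
  intro k
  have hp1 : (1 : ℝ) < p := by exact_mod_cast (Fact.out : p.Prime).one_lt
  have hp0 : (0 : ℝ) < p := by linarith
  -- choose c with p^(-c) ≤ ‖n‖²
  have hnQ : (n : ℚ_[p]) ≠ 0 := Nat.cast_ne_zero.mpr (by omega)
  have hnormn : (0:ℝ) < ‖(n : ℚ_[p])‖ ^ 2 := pow_pos (norm_pos_iff.mpr hnQ) 2
  obtain ⟨c, hc⟩ : ∃ c : ℕ, (p : ℝ) ^ (-(c : ℤ)) ≤ ‖(n : ℚ_[p])‖ ^ 2 := by
    obtain ⟨c, hc⟩ := exists_pow_lt_of_lt_one hnormn (by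
      rw [one_div]; exact inv_lt_one_of_one_lt₀ hp1 : (1:ℝ)/p < 1)
    refine ⟨c, le_of_lt ?_⟩
    calc (p : ℝ) ^ (-(c : ℤ)) = ((1:ℝ)/p) ^ c := by
          rw [zpow_neg, one_div, inv_pow, zpow_natCast]
      _ < _ := hc
  set m : ℕ := k + c with hm
  obtain ⟨a, haX, haB⟩ := Set.not_subset.mp (hunb m)
  obtain ⟨ha0, hg1, hg2, z0, hz00, hz0⟩ := haX
  have hanorm : (p : ℝ) ^ (m : ℤ) ≤ ‖a‖ := by
    have := haB
    simp only [pBall, Set.mem_setOf_eq, sub_zero, not_lt, neg_neg] at this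
    exact this
  refine ⟨a, ⟨ha0, hg1, hg2, z0, hz00, hz0⟩, ?_⟩
  intro x hx
  simp only [pBall, Set.mem_setOf_eq, neg_neg] at hx
  have hkm : (p : ℝ) ^ (k : ℤ) ≤ (p : ℝ) ^ (m : ℤ) := by
    apply zpow_le_zpow_right₀ hp1.le; exact_mod_cast Nat.le_add_right k c
  have hsub : ‖x - a‖ < ‖a‖ := lt_of_lt_of_le hx (le_trans hkm hanorm)
  have hxa : ‖x‖ = ‖a‖ := by
    have hne : ‖a‖ ≠ ‖x - a‖ := (ne_of_gt hsub)
    calc ‖x‖ = ‖a + (x - a)‖ := by ring_nf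
      _ = max ‖a‖ ‖x - a‖ := Padic.add_eq_max_of_ne hne
      _ = ‖a‖ := max_eq_left hsub.le
  have hx0 : x ≠ 0 := by
    intro h; rw [h, norm_zero] at hxa
    exact (norm_pos_iff.mpr ha0).ne' hxa.symm
  have hval : x.valuation = a.valuation := by
    have h1 := Padic.norm_eq_zpow_neg_valuation hx0
    have h2 := Padic.norm_eq_zpow_neg_valuation ha0
    rw [h1, h2] at hxa
    have := (zpow_right_strictMono₀ hp1).injective hxa
    omega
  -- the n-th power part
  set u : ℚ_[p] := (x - a) / a with hu
  have hunorm : ‖u‖ < ‖(n : ℚ_[p])‖ ^ 2 := by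
    refine lt_of_lt_of_le ?_ hc
    rw [hu, norm_div]
    rw [div_lt_iff₀ (norm_pos_iff.mpr ha0)]
    calc ‖x - a‖ < (p:ℝ) ^ (k:ℤ) := hx
      _ = (p : ℝ) ^ (-(c:ℤ)) * (p:ℝ) ^ (m:ℤ) := by
          have hkcm : (k:ℤ) = -(c:ℤ) + (m:ℤ) := by push_cast [hm]; ring
          rw [← zpow_add₀ (ne_of_gt hp0), ← hkcm]
      _ ≤ (p : ℝ) ^ (-(c:ℤ)) * ‖a‖ :=
          mul_le_mul_of_nonneg_left hanorm (by positivity)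
  obtain ⟨z1, hz10, hz1⟩ := nth_power_near_one p n (by omega) u hunorm
  refine ⟨hx0, hval ▸ hg1, hval ▸ hg2, z0 * z1, mul_ne_zero hz00 hz10, ?_⟩
  rw [mul_pow, hz0, hz1, hu]
  field_simp
  ring
end

section
/- Let p be a prime and n ≥ 1. The quotient group ℚ_p^× / (ℚ_p^×)^n is finite. -/
open Topology

lemma nth_pow_of_close (p : ℕ) [Fact p.Prime] (n : ℕ) (hn : 1 ≤ n) (a : ℚ_[p])
    (h : ‖a - 1‖ < ‖(n : ℚ_[p])‖ ^ 2) : ∃ z : ℚ_[p], z ^ n = a := by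
  have hn0 : (n : ℚ_[p]) ≠ 0 := Nat.cast_ne_zero.mpr (by omega)
  have hnle : ‖(n : ℚ_[p])‖ ≤ 1 := Padic.norm_int_le_one n
  have h1 : ‖a - 1‖ < 1 := lt_of_lt_of_le h (by nlinarith [norm_nonneg ((n:ℚ_[p]))])
  have ha1 : ‖a‖ = 1 := by
    have : a = 1 + (a - 1) := by ring
    rw [this]
    rw [Padic.add_eq_max_of_ne]
    · simp [le_antisymm_iff, h1.le]
    · rw [norm_one]; exact fun e => absurd (e ▸ h1) (lt_irrefl _)
  have haz : ‖a‖ ≤ 1 := le_of_eq ha1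
  set A : ℤ_[p] := ⟨a, haz⟩ with hA
  set F : Polynomial ℤ_[p] := Polynomial.X ^ n - Polynomial.C A with hF
  have heval : F.eval 1 = 1 - A := by simp [hF]
  have hderiv : F.derivative.eval 1 = (n : ℤ_[p]) := by
    simp [hF, Polynomial.derivative_X_pow]
  have hnorm : ‖F.eval 1‖ < ‖F.derivative.eval 1‖ ^ 2 := by
    rw [heval, hderiv]
    have e1 : ‖(1 - A : ℤ_[p])‖ = ‖a - 1‖ := by
      rw [← PadicInt.padic_norm_e_of_padicInt]
      push_cast [hA]
      change ‖(1 - a : ℚ_[p])‖ = _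
      rw [← norm_neg]; ring_nf
    have e2 : ‖(n : ℤ_[p])‖ = ‖(n : ℚ_[p])‖ := by
      rw [← PadicInt.padic_norm_e_of_padicInt]; push_cast; rfl
    rw [e1, e2]; exact h
  obtain ⟨z, hz, -⟩ := hensels_lemma hnorm
  refine ⟨(z : ℚ_[p]), ?_⟩
  have : z ^ n = A := by
    have := hz
    simp [hF, sub_eq_zero] at this
    exact this
  calc (z : ℚ_[p]) ^ n = ((z ^ n : ℤ_[p]) : ℚ_[p]) := by push_cast; ring
    _ = a := by rw [this]

/-- The subgroup of units of norm 1. -/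
def unitSphere (p : ℕ) [Fact p.Prime] : Subgroup (ℚ_[p])ˣ where
  carrier := {x | ‖(x : ℚ_[p])‖ = 1}
  one_mem' := by simp
  mul_mem' := by intro a b ha hb; simp_all [norm_mul]
  inv_mem' := by intro a ha; simp_all

lemma isEmbedding_e (p : ℕ) [Fact p.Prime] : IsEmbedding (fun x : unitSphere p => ((x : (ℚ_[p])ˣ) : ℚ_[p])) :=
  Units.isEmbedding_val₀.comp Topology.IsEmbedding.subtypeVal

lemma range_e (p : ℕ) [Fact p.Prime] : Set.range (fun x : unitSphere p => ((x : (ℚ_[p])ˣ) : ℚ_[p]))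
    = Metric.sphere (0 : ℚ_[p]) 1 := by
  ext y
  simp only [Set.mem_range, Metric.mem_sphere, dist_zero_right]
  constructor
  · rintro ⟨x, rfl⟩; exact x.2
  · intro hy
    have hy0 : y ≠ 0 := by intro h; rw [h] at hy; simp at hy
    exact ⟨⟨Units.mk0 y hy0, hy⟩, rfl⟩

instance (p : ℕ) [Fact p.Prime] : CompactSpace (unitSphere p) := by
  rw [← isCompact_univ_iff]
  have h := (isCompact_sphere (0 : ℚ_[p]) 1)
  rw [← range_e p] at h
  rw [(isEmbedding_e p).isCompact_iff]
  rwa [Set.image_univ]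

lemma mem_unitSphere (p : ℕ) [Fact p.Prime] (x : (ℚ_[p])ˣ) :
    x ∈ unitSphere p ↔ ‖(x : ℚ_[p])‖ = 1 := Iff.rfl

/-- The subgroup of units close to 1. -/
def nearOne (p : ℕ) [Fact p.Prime] (n : ℕ) (hn : 1 ≤ n) : Subgroup (unitSphere p) where
  carrier := {u | ‖((u : (ℚ_[p])ˣ) : ℚ_[p]) - 1‖ < ‖(n : ℚ_[p])‖ ^ 2}
  one_mem' := by
    simp only [Set.mem_setOf_eq, OneMemClass.coe_one, Units.val_one, sub_self, norm_zero]
    have h0 : (n : ℚ_[p]) ≠ 0 := Nat.cast_ne_zero.mpr (by omega)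
    exact pow_pos (norm_pos_iff.mpr h0) 2
  mul_mem' := by
    intro a b ha hb
    simp only [Set.mem_setOf_eq, Subgroup.coe_mul, Units.val_mul] at *
    set A : ℚ_[p] := ((a : (ℚ_[p])ˣ) : ℚ_[p]) with hA
    set B : ℚ_[p] := ((b : (ℚ_[p])ˣ) : ℚ_[p]) with hB
    have hAn : ‖A‖ = 1 := a.2
    have key : A * B - 1 = A * (B - 1) + (A - 1) := by ring
    rw [key]
    refine lt_of_le_of_lt (Padic.nonarchimedean _ _) ?_
    rw [max_lt_iff]
    constructor
    · rw [norm_mul, hAn, one_mul]; exact hb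
    · exact ha
  inv_mem' := by
    intro a ha
    simp only [Set.mem_setOf_eq] at *
    set A : ℚ_[p] := ((a : (ℚ_[p])ˣ) : ℚ_[p]) with hA
    have hAn : ‖A‖ = 1 := a.2
    have hA0 : A ≠ 0 := (a : (ℚ_[p])ˣ).ne_zero
    have hcoe : (((a⁻¹ : unitSphere p) : (ℚ_[p])ˣ) : ℚ_[p]) = A⁻¹ := by
      rw [show ((a⁻¹ : unitSphere p) : (ℚ_[p])ˣ) = ((a : (ℚ_[p])ˣ))⁻¹ from rfl]
      exact Units.val_inv_eq_inv_val _
    rw [hcoe]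
    have key : A⁻¹ - 1 = A⁻¹ * (1 - A) := by field_simp
    rw [key, norm_mul, norm_inv, hAn, inv_one, one_mul, ← norm_neg]
    simpa using ha

lemma nearOne_isOpen (p : ℕ) [Fact p.Prime] (n : ℕ) (hn : 1 ≤ n) :
    IsOpen ((nearOne p n hn : Subgroup (unitSphere p)) : Set (unitSphere p)) := by
  have hcont : Continuous (fun x : unitSphere p => ((x : (ℚ_[p])ˣ) : ℚ_[p])) :=
    Units.continuous_val.comp continuous_subtype_val
  have heq : ((nearOne p n hn : Subgroup (unitSphere p)) : Set (unitSphere p))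
      = (fun x : unitSphere p => ((x : (ℚ_[p])ˣ) : ℚ_[p])) ⁻¹' Metric.ball 1 (‖(n : ℚ_[p])‖ ^ 2) := by
    ext u
    simp [nearOne, Metric.mem_ball, dist_eq_norm]
  rw [heq]
  exact (Metric.isOpen_ball).preimage hcont

/-- The quotient of `ℚ_p^×` by the subgroup of `n`-th powers is finite. -/
theorem stmt_10 (p : ℕ) [Fact p.Prime] (n : ℕ) (hn : 1 ≤ n) :
    Finite ((ℚ_[p])ˣ ⧸ (powMonoidHom n : (ℚ_[p])ˣ →* (ℚ_[p])ˣ).range) := by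
  set H := (powMonoidHom n : (ℚ_[p])ˣ →* (ℚ_[p])ˣ).range with hH
  have hp0 : ((p : ℚ_[p])) ≠ 0 := Nat.cast_ne_zero.mpr (Fact.out : p.Prime).ne_zero
  set pu : (ℚ_[p])ˣ := Units.mk0 (p : ℚ_[p]) hp0 with hpu
  set f : (Multiplicative ℤ) × (unitSphere p) →* (ℚ_[p])ˣ :=
    ((zpowersHom (ℚ_[p])ˣ pu).comp (MonoidHom.fst _ _)) *
      ((unitSphere p).subtype.comp (MonoidHom.snd _ _)) with hf
  have hfapp : ∀ m : Multiplicative ℤ, ∀ u : unitSphere p,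
      f (m, u) = pu ^ (Multiplicative.toAdd m) * (u : (ℚ_[p])ˣ) := fun m u => rfl
  have hsurj : Function.Surjective f := by
    intro x
    have hx0 : ((x : (ℚ_[p])ˣ) : ℚ_[p]) ≠ 0 := x.ne_zero
    set v : ℤ := (x : ℚ_[p]).valuation with hv
    have hnormx : ‖(x : ℚ_[p])‖ = (p : ℝ) ^ (-v) := Padic.norm_eq_zpow_neg_valuation hx0
    have hpR : ((p : ℝ)) ≠ 0 := Nat.cast_ne_zero.mpr (Fact.out : p.Prime).ne_zero
    have hu : ‖((pu ^ (-v) * x : (ℚ_[p])ˣ) : ℚ_[p])‖ = 1 := by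
      push_cast
      rw [norm_mul, hnormx, norm_zpow]
      rw [show ‖((pu : (ℚ_[p])ˣ) : ℚ_[p])‖ = ((p : ℝ))⁻¹ by
        simp only [hpu, Units.val_mk0]; exact Padic.norm_p]
      rw [inv_zpow, ← zpow_neg, neg_neg, ← zpow_add₀ hpR]
      simp
    refine ⟨(Multiplicative.ofAdd v, ⟨pu ^ (-v) * x, hu⟩), ?_⟩
    rw [hfapp]
    simp only [toAdd_ofAdd]
    show pu ^ v * (pu ^ (-v) * x) = x
    group
  set L : Subgroup ((Multiplicative ℤ) × (unitSphere p)) :=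
    (AddSubgroup.toSubgroup (AddSubgroup.zmultiples (n : ℤ))).prod (nearOne p n hn) with hL
  have hLle : L ≤ H.comap f := by
    rintro ⟨m, u⟩ ⟨hm, hu⟩
    have hm' : Multiplicative.toAdd m ∈ AddSubgroup.zmultiples (n : ℤ) := hm
    obtain ⟨k, hk⟩ := AddSubgroup.mem_zmultiples_iff.mp hm'
    obtain ⟨z, hz⟩ := nth_pow_of_close p n hn ((u : (ℚ_[p])ˣ) : ℚ_[p]) hu
    have hz0 : z ≠ 0 := by
      intro h
      rw [h, zero_pow (by omega : n ≠ 0)] at hz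
      exact (u : (ℚ_[p])ˣ).ne_zero hz.symm
    have hzu : (Units.mk0 z hz0) ^ n = (u : (ℚ_[p])ˣ) := by
      ext; push_cast; exact hz
    refine ⟨pu ^ k * Units.mk0 z hz0, ?_⟩
    rw [powMonoidHom_apply, mul_pow, hzu, hfapp, ← hk]
    rw [smul_eq_mul, zpow_mul, zpow_natCast]
  have hVfin : (nearOne p n hn).FiniteIndex := by
    have : Finite ((unitSphere p) ⧸ (nearOne p n hn)) :=
      Subgroup.quotient_finite_of_isOpen _ (nearOne_isOpen p n hn)
    exact Subgroup.finiteIndex_of_finite_quotient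
  have hLfin : L.FiniteIndex := by
    constructor
    rw [hL, Subgroup.index_prod, AddSubgroup.index_toSubgroup, Int.index_zmultiples]
    simp only [Int.natAbs_natCast]
    exact mul_ne_zero (by omega) hVfin.index_ne_zero
  have hcomapfin : (H.comap f).FiniteIndex := Subgroup.finiteIndex_of_le hLle
  have hHfin : H.FiniteIndex := by
    constructor
    rw [← Subgroup.index_comap_of_surjective H hsurj]
    exact hcomapfin.index_ne_zero
  exact Subgroup.finite_quotient_of_finiteIndex (H := H)
end
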